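/- arXiv:2506.16930 — 2 statements merged into one kernel-verified Lean document; each statement's English description precedes it below -/
import Mathlib

section
/- Fat-shattering lower bound for the strong class: for every L > 0 and γ > 0, setting n = 1 + ⌊L/(2γ)⌋, there exist points x_1, …, x_n ∈ [0,1] and thresholds r_1, …, r_n ∈ ℝ such that for every labeling y ∈ {−1,1}^n there exists an L-Lipschitz function f : [0,1] → ℝ (hence ‖f‖_s ≤ L) with y_i·(f(x_i) − r_i) ≥ γ for all i ∈ {1, …, n}. -/
open MeasureTheory Set ENNReal

/-- The local slope of `f` at `x`: `Λ_f(x) = sup_{x' ∈ [0,1], x' ≠ x} |f(x) − f(x')|/|x − x'|`,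
valued in `[0,∞]`. -/
noncomputable def locSlope (f : ℝ → ℝ) (x : ℝ) : ℝ≥0∞ :=
  ⨆ (x' : ℝ) (_ : x' ∈ Set.Icc (0:ℝ) 1) (_ : x' ≠ x),
    ENNReal.ofReal (|f x - f x'| / |x - x'|)

/-- Strong average smoothness: `‖f‖_s = ∫_{[0,1]} Λ_f(x) dx`. -/
noncomputable def strongNorm (f : ℝ → ℝ) : ℝ≥0∞ :=
  ∫⁻ x in Set.Icc (0:ℝ) 1, locSlope f x

/-- Weak average smoothness: `‖f‖_w = sup_{t>0} t·λ({x ∈ [0,1] : Λ_f(x) ≥ t})`. -/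
noncomputable def weakNorm (f : ℝ → ℝ) : ℝ≥0∞ :=
  ⨆ (t : ℝ) (_ : 0 < t),
    ENNReal.ofReal t * volume {x ∈ Set.Icc (0:ℝ) 1 | ENNReal.ofReal t ≤ locSlope f x}

/-- Total variation of `f` on `[0,1]`. -/
noncomputable def totalVar (f : ℝ → ℝ) : ℝ≥0∞ := eVariationOn f (Set.Icc 0 1)

private lemma locSlope_le_of_lip {f : ℝ → ℝ} {L : ℝ} (hL : 0 ≤ L)
    (hf : ∀ u v : ℝ, |f u - f v| ≤ L * |u - v|) (x : ℝ) :
    locSlope f x ≤ ENNReal.ofReal L := by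
  refine iSup_le fun x' => iSup_le fun _ => iSup_le fun hx' => ?_
  apply ENNReal.ofReal_le_ofReal
  have hpos : 0 < |x - x'| := abs_pos.2 (sub_ne_zero.2 fun h => hx' h.symm)
  rw [div_le_iff₀ hpos]
  exact hf x x' 

/-- Fat-shattering lower bound for the strong class: for `L, γ > 0` and
`n = 1 + ⌊L/(2γ)⌋`, there are `n` points in `[0,1]` and thresholds that are
`γ`-shattered by `L`-Lipschitz functions (which have `‖f‖_s ≤ L`). -/
theorem strong_class_fat_shattering_lower (L γ : ℝ) (hL : 0 < L) (hγ : 0 < γ) :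
    ∃ x r : Fin (1 + Nat.floor (L / (2 * γ))) → ℝ,
      (∀ i, x i ∈ Set.Icc (0:ℝ) 1) ∧
      ∀ y : Fin (1 + Nat.floor (L / (2 * γ))) → ℝ, (∀ i, y i = 1 ∨ y i = -1) →
        ∃ f : ℝ → ℝ,
          (∀ u ∈ Set.Icc (0:ℝ) 1, ∀ v ∈ Set.Icc (0:ℝ) 1, |f u - f v| ≤ L * |u - v|) ∧
          strongNorm f ≤ ENNReal.ofReal L ∧
          ∀ i, γ ≤ y i * (f (x i) - r i) := by
  set m := Nat.floor (L / (2 * γ)) with hm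
  set d : ℝ := 2 * γ / L with hd
  have hd0 : 0 < d := by positivity
  refine ⟨fun i => (i : ℝ) * d, fun _ => 0, ?_, ?_⟩
  · intro i
    constructor
    · positivity
    · have h1 : (i : ℝ) ≤ m := by
        exact_mod_cast Nat.le_of_lt_succ (by have := i.2; omega)
      have h2 : (m : ℝ) ≤ L / (2 * γ) := Nat.floor_le (by positivity)
      calc (i : ℝ) * d ≤ (L / (2 * γ)) * d := by
            apply mul_le_mul_of_nonneg_right (h1.trans h2) hd0.le
        _ = 1 := by rw [hd]; field_simp
  · intro y hy
    set f : ℝ → ℝ := fun x =>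
      Finset.univ.inf' (Finset.univ_nonempty) (fun i : Fin (1 + m) => γ * y i + L * |x - (i : ℝ) * d|)
      with hf
    have hyabs : ∀ i, |y i| = 1 := fun i => by rcases hy i with h | h <;> simp [h]
    have hyge : ∀ i, -1 ≤ y i := fun i => by rcases hy i with h | h <;> simp [h]
    have hyle : ∀ i, y i ≤ 1 := fun i => by rcases hy i with h | h <;> simp [h]
    have lip : ∀ u v : ℝ, |f u - f v| ≤ L * |u - v| := by
      have key : ∀ u v : ℝ, f u - f v ≤ L * |u - v| := by
        intro u v
        obtain ⟨i, -, hi⟩ := Finset.exists_mem_eq_inf' (Finset.univ_nonempty)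
          (fun i : Fin (1 + m) => γ * y i + L * |v - (i : ℝ) * d|)
        have h1 : f u ≤ γ * y i + L * |u - (i : ℝ) * d| := Finset.inf'_le _ (Finset.mem_univ i)
        have h2 : f v = γ * y i + L * |v - (i : ℝ) * d| := hi
        have h3 : |u - (i : ℝ) * d| ≤ |v - (i : ℝ) * d| + |u - v| := by
          calc |u - (i : ℝ) * d| = |(v - (i : ℝ) * d) + (u - v)| := by ring_nf
            _ ≤ _ := abs_add_le _ _
        nlinarith [h1, h3]
      intro u v
      rw [abs_sub_le_iff]
      exact ⟨key u v, by simpa [abs_sub_comm] using key v u⟩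
    have fval : ∀ j : Fin (1 + m), f ((j : ℝ) * d) = γ * y j := by
      intro j
      apply le_antisymm
      · calc f ((j : ℝ) * d) ≤ γ * y j + L * |(j : ℝ) * d - (j : ℝ) * d| :=
              Finset.inf'_le _ (Finset.mem_univ j)
          _ = γ * y j := by simp
      · apply Finset.le_inf'
        intro i _
        rcases eq_or_ne i j with rfl | hij
        · simp
        · have hij' : (i : ℤ) ≠ (j : ℤ) := fun h => hij (Fin.ext (by exact_mod_cast h))
          have h1z : (1 : ℤ) ≤ |(j : ℤ) - (i : ℤ)| := Int.one_le_abs (sub_ne_zero.2 (Ne.symm hij'))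
          have h1 : (1 : ℝ) ≤ |(j : ℝ) - (i : ℝ)| := by exact_mod_cast h1z
          have h2 : d ≤ |(j : ℝ) * d - (i : ℝ) * d| := by
            rw [← sub_mul, abs_mul, abs_of_pos hd0]
            nlinarith
          have h3 : L * d = 2 * γ := by rw [hd]; field_simp
          have h4 : γ * y j ≤ γ := by nlinarith [hyle j, hγ.le]
          have h5 : -γ ≤ γ * y i := by nlinarith [hyge i, hγ.le]
          nlinarith [abs_nonneg ((j : ℝ) * d - (i : ℝ) * d)]
    refine ⟨f, fun u _ v _ => lip u v, ?_, ?_⟩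
    · calc strongNorm f ≤ ∫⁻ _ in Set.Icc (0:ℝ) 1, ENNReal.ofReal L :=
            lintegral_mono fun x => locSlope_le_of_lip hL.le lip x
        _ = ENNReal.ofReal L * volume (Set.Icc (0:ℝ) 1) := setLIntegral_const _ _
        _ = ENNReal.ofReal L := by simp [Real.volume_Icc]
    · intro i
      rw [fval i, sub_zero]
      rcases hy i with h | h <;> rw [h] <;> nlinarith
end

section
/- Fat-shattering upper bound for the strong class: for every L > 0 and γ > 0, if distinct points x_1, …, x_m ∈ [0,1] and thresholds r_1, …, r_m ∈ ℝ are such that for every labeling y ∈ {−1,1}^m there exists f : [0,1] → ℝ with ‖f‖_s ≤ L and y_i·(f(x_i) − r_i) ≥ γ for all i, then m ≤ 1 + ⌊L/(2γ)⌋. -/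
open MeasureTheory Set ENNReal

/-- The local slope at any interior point of an interval `[a,b] ⊆ [0,1]` is at least
the slope of the chord `|f a − f b|/(b − a)`. -/
lemma slope_pair_lower (f : ℝ → ℝ) {a b xx : ℝ} (ha : a ∈ Set.Icc (0:ℝ) 1)
    (hb : b ∈ Set.Icc (0:ℝ) 1) (hxx : xx ∈ Set.Ioo a b) :
    ENNReal.ofReal (|f a - f b| / (b - a)) ≤ locSlope f xx := by
  obtain ⟨hax, hxb⟩ := hxx
  have hu : (0:ℝ) < xx - a := by linarith
  have hv : (0:ℝ) < b - xx := by linarith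
  set p := |f xx - f a| with hp
  set q := |f xx - f b| with hq
  have h1 : ENNReal.ofReal (p / (xx - a)) ≤ locSlope f xx := by
    have : ENNReal.ofReal (|f xx - f a| / |xx - a|) ≤ locSlope f xx := by
      unfold locSlope
      exact le_iSup_of_le a (le_iSup_of_le ha (le_iSup_of_le (ne_of_lt hax) le_rfl))
    rwa [abs_of_pos hu] at this
  have h2 : ENNReal.ofReal (q / (b - xx)) ≤ locSlope f xx := by
    have : ENNReal.ofReal (|f xx - f b| / |xx - b|) ≤ locSlope f xx := by
      unfold locSlope
      exact le_iSup_of_le b (le_iSup_of_le hb (le_iSup_of_le (ne_of_gt hxb) le_rfl))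
    rwa [abs_of_neg (by linarith : xx - b < 0), neg_sub] at this
  set M := max (p / (xx - a)) (q / (b - xx)) with hM
  have hpM : p ≤ M * (xx - a) := (div_le_iff₀ hu).1 (le_max_left _ _)
  have hqM : q ≤ M * (b - xx) := (div_le_iff₀ hv).1 (le_max_right _ _)
  have htri : |f a - f b| ≤ p + q := by
    have he : f a - f b = (f xx - f b) - (f xx - f a) := by ring
    rw [he]
    calc |(f xx - f b) - (f xx - f a)| ≤ |f xx - f b| + |f xx - f a| := abs_sub _ _
      _ = p + q := by rw [add_comm]
  have hMb : |f a - f b| / (b - a) ≤ M := by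
    rw [div_le_iff₀ (by linarith : (0:ℝ) < b - a)]
    have : M * (xx - a) + M * (b - xx) = M * (b - a) := by ring
    linarith
  calc ENNReal.ofReal (|f a - f b| / (b - a)) ≤ ENNReal.ofReal M :=
        ENNReal.ofReal_le_ofReal hMb
    _ ≤ locSlope f xx := by
        rcases max_cases (p / (xx - a)) (q / (b - xx)) with ⟨hMeq, _⟩ | ⟨hMeq, _⟩ <;>
          rw [hM, hMeq]
        · exact h1
        · exact h2

/-- Sum of chord slopes is bounded by the strong norm. -/
lemma sum_chord_le_strongNorm {n : ℕ} (F : ℝ → ℝ) (z : Fin (n+1) → ℝ)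
    (hzmono : StrictMono z) (hzm : ∀ j, z j ∈ Set.Icc (0:ℝ) 1) :
    ∑ k : Fin n, ENNReal.ofReal (|F (z k.castSucc) - F (z k.succ)|) ≤ strongNorm F := by
  set S : Fin n → Set ℝ := fun k => Set.Ioo (z k.castSucc) (z k.succ) with hS
  have hlen : ∀ k : Fin n, (0:ℝ) < z k.succ - z k.castSucc := fun k =>
    sub_pos.2 (hzmono Fin.castSucc_lt_succ)
  have hstep : ∀ k : Fin n,
      ENNReal.ofReal (|F (z k.castSucc) - F (z k.succ)|) ≤ ∫⁻ t in S k, locSlope F t := by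
    intro k
    have hconst : ∫⁻ _ in S k,
        ENNReal.ofReal (|F (z k.castSucc) - F (z k.succ)| / (z k.succ - z k.castSucc))
        = ENNReal.ofReal (|F (z k.castSucc) - F (z k.succ)|) := by
      rw [setLIntegral_const, hS, Real.volume_Ioo,
        ← ENNReal.ofReal_mul (div_nonneg (abs_nonneg _) (hlen k).le), div_mul_cancel₀ _ (hlen k).ne']
    rw [← hconst]
    exact setLIntegral_mono' measurableSet_Ioo
      (fun t ht => slope_pair_lower F (hzm _) (hzm _) ht)
  calc ∑ k : Fin n, ENNReal.ofReal (|F (z k.castSucc) - F (z k.succ)|)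
      ≤ ∑ k : Fin n, ∫⁻ t in S k, locSlope F t := Finset.sum_le_sum fun k _ => hstep k
    _ = ∫⁻ t in ⋃ k, S k, locSlope F t := by
        rw [lintegral_iUnion (fun k => measurableSet_Ioo)
          (fun k l hkl => ?_), tsum_fintype]
        rcases lt_or_gt_of_ne hkl with h | h
        · refine (Set.Ioo_disjoint_Ioo.2 ?_)
          refine le_trans (min_le_left _ _) (le_trans ?_ (le_max_right _ _))
          exact hzmono.monotone (by
            rw [Fin.le_def, Fin.val_succ, Fin.coe_castSucc]
            exact h)
        · refine (Set.Ioo_disjoint_Ioo.2 ?_)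
          refine le_trans (min_le_right _ _) (le_trans ?_ (le_max_left _ _))
          exact hzmono.monotone (by
            rw [Fin.le_def, Fin.val_succ, Fin.coe_castSucc]
            exact h)
    _ ≤ ∫⁻ t in Set.Icc (0:ℝ) 1, locSlope F t := by
        refine lintegral_mono_set (Set.iUnion_subset fun k => ?_)
        intro t ht
        exact ⟨le_trans (hzm k.castSucc).1 ht.1.le, le_trans ht.2.le (hzm k.succ).2⟩

/-- Fat-shattering upper bound for the strong class: if `m` distinct points of `[0,1]`
with some thresholds are `γ`-shattered by `{f : ‖f‖_s ≤ L}`, then `m ≤ 1 + ⌊L/(2γ)⌋`. -/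
theorem strong_class_fat_shattering_upper (L γ : ℝ) (hL : 0 < L) (hγ : 0 < γ) (m : ℕ)
    (x r : Fin m → ℝ) (hx : Function.Injective x)
    (hxm : ∀ i, x i ∈ Set.Icc (0:ℝ) 1)
    (hshatter : ∀ y : Fin m → ℝ, (∀ i, y i = 1 ∨ y i = -1) →
      ∃ f : ℝ → ℝ, strongNorm f ≤ ENNReal.ofReal L ∧ ∀ i, γ ≤ y i * (f (x i) - r i)) :
    m ≤ 1 + Nat.floor (L / (2 * γ)) := by
  rcases m with _ | n
  · exact Nat.zero_le _
  set σ := Tuple.sort x with hσ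
  set z : Fin (n+1) → ℝ := x ∘ σ with hzdef
  have hzmono : StrictMono z :=
    (Tuple.monotone_sort x).strictMono_of_injective (hx.comp σ.injective)
  have hzm : ∀ j, z j ∈ Set.Icc (0:ℝ) 1 := fun j => hxm (σ j)
  set y : Fin (n+1) → ℝ := fun i => (-1 : ℝ) ^ ((σ.symm i : Fin (n+1)) : ℕ) with hy
  have hy1 : ∀ i, y i = 1 ∨ y i = -1 := by
    intro i
    rcases Nat.even_or_odd ((σ.symm i : Fin (n+1)) : ℕ) with h | h
    · left; exact h.neg_one_pow
    · right; exact h.neg_one_pow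
  obtain ⟨f, hfL, hfy⟩ := hshatter y hy1
  obtain ⟨g, hgL, hgy⟩ := hshatter (-y) (by
    intro i
    rcases hy1 i with h | h
    · right; simp [h]
    · left; simp [h])
  have hfg : ∀ i, 2 * γ ≤ y i * (f (x i) - g (x i)) := by
    intro i
    have h1 := hfy i
    have h2 := hgy i
    simp only [Pi.neg_apply] at h2
    have he : y i * (f (x i) - g (x i))
        = y i * (f (x i) - r i) + (-(y i)) * (g (x i) - r i) := by ring
    linarith [he ▸ add_le_add h1 h2]
  have hz2 : ∀ j : Fin (n+1), 2 * γ ≤ (-1 : ℝ) ^ (j : ℕ) * (f (z j) - g (z j)) := by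
    intro j
    have := hfg (σ j)
    simpa [hy, hzdef, Equiv.symm_apply_apply, Function.comp] using this
  -- chord oscillation of f - g is at least 4γ
  have hosc : ∀ k : Fin n,
      4 * γ ≤ |f (z k.castSucc) - f (z k.succ)| + |g (z k.castSucc) - g (z k.succ)| := by
    intro k
    set a := z k.castSucc
    set b := z k.succ
    set s : ℝ := (-1 : ℝ) ^ ((k.castSucc : Fin (n+1)) : ℕ) with hs
    have e1 : 2 * γ ≤ s * (f a - g a) := hz2 k.castSucc
    have e2 : 2 * γ ≤ -(s * (f b - g b)) := by
      have := hz2 k.succ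
      have hv : ((k.succ : Fin (n+1)) : ℕ) = ((k.castSucc : Fin (n+1)) : ℕ) + 1 := by
        rw [Fin.val_succ, Fin.coe_castSucc]
      rw [hv, pow_succ] at this
      rw [hs]
      linarith [this]
    have habs_s : |s| = 1 := by
      rw [hs, abs_pow, abs_neg, abs_one, one_pow]
    have h4 : 4 * γ ≤ s * ((f a - g a) - (f b - g b)) := by
      have he : s * ((f a - g a) - (f b - g b))
          = s * (f a - g a) + (-(s * (f b - g b))) := by ring
      linarith [he ▸ add_le_add e1 e2]
    have h5 : 4 * γ ≤ |(f a - g a) - (f b - g b)| := by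
      calc 4 * γ ≤ s * ((f a - g a) - (f b - g b)) := h4
        _ ≤ |s * ((f a - g a) - (f b - g b))| := le_abs_self _
        _ = |(f a - g a) - (f b - g b)| := by rw [abs_mul, habs_s, one_mul]
    calc 4 * γ ≤ |(f a - g a) - (f b - g b)| := h5
      _ = |(f a - f b) - (g a - g b)| := by ring_nf
      _ ≤ |f a - f b| + |g a - g b| := abs_sub _ _
  -- sum up
  have hsum : (n : ℝ≥0∞) * ENNReal.ofReal (4 * γ) ≤ ENNReal.ofReal L + ENNReal.ofReal L := by
    calc (n : ℝ≥0∞) * ENNReal.ofReal (4 * γ)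
        = ∑ _k : Fin n, ENNReal.ofReal (4 * γ) := by
          rw [Finset.sum_const, Finset.card_univ, Fintype.card_fin, nsmul_eq_mul]
      _ ≤ ∑ k : Fin n, (ENNReal.ofReal (|f (z k.castSucc) - f (z k.succ)|)
            + ENNReal.ofReal (|g (z k.castSucc) - g (z k.succ)|)) := by
          refine Finset.sum_le_sum fun k _ => ?_
          rw [← ENNReal.ofReal_add (abs_nonneg _) (abs_nonneg _)]
          exact ENNReal.ofReal_le_ofReal (hosc k)
      _ = ∑ k : Fin n, ENNReal.ofReal (|f (z k.castSucc) - f (z k.succ)|)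
            + ∑ k : Fin n, ENNReal.ofReal (|g (z k.castSucc) - g (z k.succ)|) :=
          Finset.sum_add_distrib
      _ ≤ ENNReal.ofReal L + ENNReal.ofReal L :=
          add_le_add
            (le_trans (sum_chord_le_strongNorm f z hzmono hzm) hfL)
            (le_trans (sum_chord_le_strongNorm g z hzmono hzm) hgL)
  have hreal : (n : ℝ) * (4 * γ) ≤ L + L := by
    have : ENNReal.ofReal ((n : ℝ) * (4 * γ)) ≤ ENNReal.ofReal (L + L) := by
      rw [ENNReal.ofReal_mul (by positivity), ENNReal.ofReal_natCast,
        ENNReal.ofReal_add hL.le hL.le]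
      exact hsum
    exact (ENNReal.ofReal_le_ofReal_iff (by linarith)).1 this
  have hfl : (n : ℝ) ≤ L / (2 * γ) := by
    rw [le_div_iff₀ (by positivity)]
    linarith
  have := Nat.le_floor hfl
  omega
end
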